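/- Let X be a real Banach space, x ∈ B_X and 0 < α ≤ 2. Then Dc(x) ≥ α if and only if B_X ⊆ closure(convexHull(Δ_{2−α+ε}(x))) for every ε > 0. -/

import Mathlib

open Set Metric Filter

variable {X : Type*} [NormedAddCommGroup X] [NormedSpace ℝ X]

/-- The slice `S(f, δ)` of the closed unit ball of `X`, determined by a norm-one functional
`f` and `δ > 0` (the norm and positivity conditions are imposed at use sites). -/
def unitBallSlice (f : X →L[ℝ] ℝ) (δ : ℝ) : Set X :=
  {y | ‖y‖ ≤ 1 ∧ 1 - δ < f y}

/-- The Daugavet constant of a point: the infimum over all slices of the unit ball of the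
supremum of distances from `x` to points of the slice. -/
noncomputable def Dc (x : X) : ℝ :=
  sInf {r | ∃ (f : X →L[ℝ] ℝ) (δ : ℝ), ‖f‖ = 1 ∧ 0 < δ ∧
    r = sSup ((fun y => ‖x - y‖) '' unitBallSlice f δ)}

/-- The Δ-constant of a point: the infimum over all slices of the unit ball containing `x`
of the supremum of distances from `x` to points of the slice. -/
noncomputable def DeltaC (x : X) : ℝ :=
  sInf {r | ∃ (f : X →L[ℝ] ℝ) (δ : ℝ), ‖f‖ = 1 ∧ 0 < δ ∧ x ∈ unitBallSlice f δ ∧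
    r = sSup ((fun y => ‖x - y‖) '' unitBallSlice f δ)}

/-- The set `Δ_ε(x)` of points of the unit ball at distance at least `2 - ε` from `x`. -/
def DeltaSet (x : X) (ε : ℝ) : Set X :=
  {y | ‖y‖ ≤ 1 ∧ 2 - ε ≤ ‖y - x‖}

section Aux

variable {X : Type*} [NormedAddCommGroup X] [NormedSpace ℝ X]

lemma slice_nonempty' (f : X →L[ℝ] ℝ) (hf : ‖f‖ = 1) {δ : ℝ} (hδ : 0 < δ) :
    ∃ z : X, ‖z‖ ≤ 1 ∧ 1 - δ < f z := by
  have h : (1 - δ) < ‖f‖ := by rw [hf]; linarith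
  obtain ⟨z, hz, hz2⟩ := f.exists_lt_apply_of_lt_opNorm h
  rcases le_or_gt 0 (f z) with h0 | h0
  · exact ⟨z, hz.le, by rwa [Real.norm_eq_abs, abs_of_nonneg h0] at hz2⟩
  · refine ⟨-z, by simpa using hz.le, ?_⟩
    rw [map_neg]
    rwa [Real.norm_eq_abs, abs_of_neg h0] at hz2

lemma bddAbove_img (x : X) (hx : ‖x‖ ≤ 1) (f : X →L[ℝ] ℝ) (δ : ℝ) :
    BddAbove ((fun y => ‖x - y‖) '' unitBallSlice f δ) := by
  refine ⟨2, ?_⟩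
  rintro d ⟨y, ⟨hy1, _⟩, rfl⟩
  calc ‖x - y‖ ≤ ‖x‖ + ‖y‖ := norm_sub_le x y
    _ ≤ 2 := by linarith

lemma dcSet_bddBelow (x : X) (hx : ‖x‖ ≤ 1) :
    BddBelow {r : ℝ | ∃ (f : X →L[ℝ] ℝ) (δ : ℝ), ‖f‖ = 1 ∧ 0 < δ ∧
      r = sSup ((fun y => ‖x - y‖) '' unitBallSlice f δ)} := by
  refine ⟨0, ?_⟩
  rintro r ⟨f, δ, hf, hδ, rfl⟩
  obtain ⟨z, hz1, hz2⟩ := slice_nonempty' f hf hδ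
  have hmem : ‖x - z‖ ∈ (fun y => ‖x - y‖) '' unitBallSlice f δ :=
    ⟨z, ⟨hz1, hz2⟩, rfl⟩
  exact le_trans (norm_nonneg _) (le_csSup (bddAbove_img x hx f δ) hmem)

end Aux

/-- `Dc(x) ≥ α` iff the unit ball is contained in the closed convex hull of
`Δ_{2-α+ε}(x)` for every `ε > 0`. -/
theorem daugavetConstant_ge_iff [CompleteSpace X] (x : X) (hx : ‖x‖ ≤ 1)
    (α : ℝ) (hα₀ : 0 < α) (hα₂ : α ≤ 2) :
    α ≤ Dc x ↔
      ∀ ε > (0 : ℝ), {y : X | ‖y‖ ≤ 1} ⊆ closure (convexHull ℝ (DeltaSet x (2 - α + ε))) := by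
  constructor
  · -- forward
    intro hDc ε hε b hb
    simp only [mem_setOf_eq] at hb
    by_contra hbC
    -- X is nontrivial: otherwise Dc x = 0 < α
    have hX : ∃ v : X, v ≠ 0 := by
      by_contra hno
      push_neg at hno
      have hempty : {r : ℝ | ∃ (f : X →L[ℝ] ℝ) (δ : ℝ), ‖f‖ = 1 ∧ 0 < δ ∧
          r = sSup ((fun y => ‖x - y‖) '' unitBallSlice f δ)} = ∅ := by
        ext r
        simp only [mem_setOf_eq, mem_empty_iff_false, iff_false]
        rintro ⟨f, δ, hf, -, -⟩
        have : f = 0 := by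
          ext v
          rw [hno v, map_zero]; rfl
        rw [this, norm_zero] at hf
        norm_num at hf
      have : Dc x = 0 := by rw [Dc, hempty, Real.sInf_empty]
      rw [this] at hDc
      linarith
    have hgoal : ∃ (g : X →L[ℝ] ℝ) (δ : ℝ), ‖g‖ = 1 ∧ 0 < δ ∧
        ∀ y ∈ DeltaSet x (2 - α + ε), g y ≤ 1 - δ := by
      rcases (DeltaSet x (2 - α + ε)).eq_empty_or_nonempty with hΔe | ⟨a, ha⟩
      · obtain ⟨v, hv⟩ := hX
        obtain ⟨g, hg, -⟩ := exists_dual_vector ℝ v (norm_ne_zero_iff.mpr hv)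
        exact ⟨g, 1, hg, one_pos, by simp [hΔe]⟩
      · obtain ⟨f, u, hfu, hub⟩ := geometric_hahn_banach_closed_point
          ((convex_convexHull ℝ (DeltaSet x (2 - α + ε))).closure) isClosed_closure hbC
        have hfa : f a < u := hfu a (subset_closure (subset_convexHull ℝ _ ha))
        have hf0 : (0 : ℝ) < ‖f‖ := by
          rw [norm_pos_iff]
          intro h
          rw [h] at hfa hub
          simp at hfa hub
          linarith
        set g : X →L[ℝ] ℝ := ‖f‖⁻¹ • f with hgdef
        have hg : ‖g‖ = 1 := by
          set_option maxSynthPendingDepth 2 in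
          rw [hgdef, norm_smul, norm_inv, norm_norm, inv_mul_cancel₀ hf0.ne']
        have hgb : g b ≤ 1 := by
          calc g b ≤ ‖g b‖ := le_abs_self _
            _ ≤ ‖g‖ * ‖b‖ := g.le_opNorm b
            _ ≤ 1 := by rw [hg]; linarith
        have hub' : u / ‖f‖ < g b := by
          have : g b = f b / ‖f‖ := by
            simp [hgdef, ContinuousLinearMap.smul_apply, div_eq_inv_mul]
          rw [this]
          exact (div_lt_div_iff_of_pos_right hf0).mpr hub
        refine ⟨g, 1 - u / ‖f‖, hg, by linarith, ?_⟩
        intro y hy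
        have hfy : f y < u := hfu y (subset_closure (subset_convexHull ℝ _ hy))
        have : g y = f y / ‖f‖ := by
          simp [hgdef, ContinuousLinearMap.smul_apply, div_eq_inv_mul]
        rw [this]
        have hdiv : f y / ‖f‖ < u / ‖f‖ := (div_lt_div_iff_of_pos_right hf0).mpr hfy
        linarith
    obtain ⟨g, δ, hg, hδ, hsep⟩ := hgoal
    have hrS : sSup ((fun y => ‖x - y‖) '' unitBallSlice g δ) ∈
        {r : ℝ | ∃ (f : X →L[ℝ] ℝ) (δ : ℝ), ‖f‖ = 1 ∧ 0 < δ ∧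
          r = sSup ((fun y => ‖x - y‖) '' unitBallSlice f δ)} := ⟨g, δ, hg, hδ, rfl⟩
    have hDcr : Dc x ≤ sSup ((fun y => ‖x - y‖) '' unitBallSlice g δ) :=
      csInf_le (dcSet_bddBelow x hx) hrS
    have hr : sSup ((fun y => ‖x - y‖) '' unitBallSlice g δ) ≤ α - ε := by
      obtain ⟨z, hz1, hz2⟩ := slice_nonempty' g hg hδ
      refine csSup_le ⟨‖x - z‖, z, ⟨hz1, hz2⟩, rfl⟩ ?_
      rintro d ⟨y, ⟨hy1, hy2⟩, rfl⟩
      show ‖x - y‖ ≤ α - ε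
      have hyΔ : y ∉ DeltaSet x (2 - α + ε) := fun hyΔ => by
        have := hsep y hyΔ; linarith
      have : ¬ (2 - (2 - α + ε) ≤ ‖y - x‖) := fun hc => hyΔ ⟨hy1, hc⟩
      rw [norm_sub_rev]
      push_neg at this
      linarith
    rw [Dc] at hDc
    have hDc' : α ≤ Dc x := by rw [Dc]; exact hDc
    linarith
  · -- reverse
    intro h
    -- rule out the trivial space
    have hX : ∃ v : X, v ≠ 0 := by
      by_contra hno
      push_neg at hno
      have h0 : (0 : X) ∈ closure (convexHull ℝ (DeltaSet x (2 - α + α / 2))) :=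
        h (α / 2) (by linarith) (by simp)
      have hΔe : DeltaSet x (2 - α + α / 2) = ∅ := by
        ext y
        simp only [DeltaSet, mem_setOf_eq, mem_empty_iff_false, iff_false, not_and, not_le]
        intro _
        rw [hno y, hno x]
        simp
        linarith
      rw [hΔe] at h0
      simp [convexHull_empty] at h0
    obtain ⟨v, hv⟩ := hX
    obtain ⟨f₀, hf₀, -⟩ := exists_dual_vector ℝ v (norm_ne_zero_iff.mpr hv)
    rw [Dc]
    refine le_csInf ⟨_, f₀, 1, hf₀, one_pos, rfl⟩ ?_
    rintro r ⟨f, δ, hf, hδ, rfl⟩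
    by_contra hlt
    push_neg at hlt
    set ε' : ℝ := α - sSup ((fun y => ‖x - y‖) '' unitBallSlice f δ) with hε'def
    have hε' : 0 < ε' := by simp [hε'def]; linarith
    -- find a point of the slice in the Delta set
    have hkey : ∃ y, y ∈ DeltaSet x (2 - α + ε' / 2) ∧ 1 - δ < f y := by
      by_contra hno
      push_neg at hno
      have hsub : DeltaSet x (2 - α + ε' / 2) ⊆ {y : X | f y ≤ 1 - δ} := by
        intro y hy
        exact hno y hy
      have hconvC : Convex ℝ {y : X | f y ≤ 1 - δ} :=
        convex_halfSpace_le ⟨map_add f, map_smul f⟩ (1 - δ)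
      have hclC : IsClosed {y : X | f y ≤ 1 - δ} :=
        isClosed_le f.continuous continuous_const
      have hall : closure (convexHull ℝ (DeltaSet x (2 - α + ε' / 2))) ⊆
          {y : X | f y ≤ 1 - δ} :=
        closure_minimal (convexHull_min hsub hconvC) hclC
      obtain ⟨z, hz1, hz2⟩ := slice_nonempty' f hf (half_pos hδ)
      have hz3 : f z ≤ 1 - δ := hall (h (ε' / 2) (half_pos hε') hz1)
      linarith
    obtain ⟨y, ⟨hy1, hy2⟩, hy3⟩ := hkey
    have hmem : ‖x - y‖ ∈ (fun y => ‖x - y‖) '' unitBallSlice f δ := ⟨y, ⟨hy1, hy3⟩, rfl⟩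
    have hle : ‖x - y‖ ≤ sSup ((fun y => ‖x - y‖) '' unitBallSlice f δ) :=
      le_csSup (bddAbove_img x hx f δ) hmem
    rw [norm_sub_rev] at hle
    -- hy2 : 2 - (2 - α + ε'/2) ≤ ‖y - x‖, i.e. α - ε'/2 ≤ ‖y - x‖
    have : α - ε' / 2 ≤ ‖y - x‖ := by linarith
    linarith
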